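/- Let f_i (i ∈ ℕ) and f be quasi-concave functions on ℝ^N such that f_i decreases pointwise to f on ℝ^N as i → ∞. Then for every t > 0 the sets L_t(f_i) converge to L_t(f) in the Hausdorff sense, i.e. the Hausdorff (extended) distance between L_t(f_i) and L_t(f) tends to 0 as i → ∞. -/

import Mathlib

open Filter Topology MeasureTheory

noncomputable section

/-- A function `f : ℝ^N → ℝ` is quasi-concave if it is nonnegative and all its
superlevel sets `{x | t ≤ f x}` for `t > 0` are empty or compact and convex. -/
def QuasiConcave {N : ℕ} (f : EuclideanSpace ℝ (Fin N) → ℝ) : Prop :=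
  (∀ x, 0 ≤ f x) ∧
  ∀ t : ℝ, 0 < t →
    {x | t ≤ f x} = ∅ ∨ (IsCompact {x | t ≤ f x} ∧ Convex ℝ {x | t ≤ f x})

/-- If a sequence of quasi-concave functions decreases pointwise to a quasi-concave `f`,
then for every `t > 0` the superlevel sets `L_t(f_i)` converge to `L_t(f)` in the
Hausdorff (extended) distance. -/
theorem quasiConcave_decreasing_level_sets_converge {N : ℕ}
    (fi : ℕ → EuclideanSpace ℝ (Fin N) → ℝ) (f : EuclideanSpace ℝ (Fin N) → ℝ)
    (hfi : ∀ i, QuasiConcave (fi i)) (hf : QuasiConcave f)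
    (hanti : Antitone fi)
    (hconv : ∀ x, Tendsto (fun i => fi i x) atTop (𝓝 (f x))) :
    ∀ t : ℝ, 0 < t →
      Tendsto (fun i => EMetric.hausdorffEdist {x | t ≤ fi i x} {x | t ≤ f x})
        atTop (𝓝 0) := by
  intro t ht
  set S : ℕ → Set (EuclideanSpace ℝ (Fin N)) := fun i => {x | t ≤ fi i x} with hS
  set T : Set (EuclideanSpace ℝ (Fin N)) := {x | t ≤ f x} with hT
  -- f ≤ fi i pointwise
  have hle : ∀ i x, f x ≤ fi i x := by
    intro i x
    refine le_of_tendsto (hconv x) ?_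
    filter_upwards [eventually_ge_atTop i] with j hj
    exact hanti hj x
  -- T ⊆ S i
  have hTS : ∀ i, T ⊆ S i := fun i x hx => le_trans hx (hle i x)
  -- S antitone
  have hSanti : ∀ ⦃i j : ℕ⦄, i ≤ j → S j ⊆ S i := by
    intro i j hij x hx
    exact le_trans hx (hanti hij x)
  -- ⋂ S i ⊆ T
  have hInter : (⋂ i, S i) ⊆ T := by
    intro x hx
    have : ∀ i, t ≤ fi i x := fun i => Set.mem_iInter.1 hx i
    exact ge_of_tendsto (hconv x) (Eventually.of_forall this)
  by_cases hne : ∀ i, (S i).Nonempty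
  · -- all level sets nonempty, hence compact
    have hScompact : ∀ i, IsCompact (S i) := by
      intro i
      rcases (hfi i).2 t ht with h | h
      · exact absurd h (Set.nonempty_iff_ne_empty.1 (hne i))
      · exact h.1
    have hSclosed : ∀ i, IsClosed (S i) := fun i => (hScompact i).isClosed
    -- T is nonempty: intersection of nested nonempty compacts is nonempty
    have hInterNe : (⋂ i, S i).Nonempty :=
      IsCompact.nonempty_iInter_of_sequence_nonempty_isCompact_isClosed S
        (fun n => hSanti (Nat.le_succ n)) hne (hScompact 0) hSclosed
    have hTne : T.Nonempty := hInterNe.mono hInter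
    rw [ENNReal.tendsto_atTop_zero]
    intro ε hε
    -- open thickening of T
    set U : Set (EuclideanSpace ℝ (Fin N)) := {x | EMetric.infEdist x T < ε} with hU
    have hUopen : IsOpen U := by
      have : U = (fun x => EMetric.infEdist x T) ⁻¹' Set.Iio ε := rfl
      rw [this]
      exact (EMetric.continuous_infEdist).isOpen_preimage _ isOpen_Iio
    have hTU : T ⊆ U := by
      intro x hx
      have : EMetric.infEdist x T = 0 := EMetric.infEdist_zero_of_mem hx
      simpa [hU, this] using hε
    -- the closed sets S i ∩ Uᶜ have empty intersection within compact S 0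
    have hempty : (S 0 ∩ ⋂ i, S i ∩ Uᶜ) = ∅ := by
      ext x
      simp only [Set.mem_inter_iff, Set.mem_iInter, Set.mem_empty_iff_false, iff_false]
      rintro ⟨-, hx⟩
      have hx1 : x ∈ ⋂ i, S i := Set.mem_iInter.2 fun i => (hx i).1
      exact (hx 0).2 (hTU (hInter hx1))
    obtain ⟨u, hu⟩ := (hScompact 0).elim_finite_subfamily_closed
      (fun i => S i ∩ Uᶜ) (fun i => (hSclosed i).inter hUopen.isClosed_compl) hempty
    refine ⟨u.sup id, fun n hn => ?_⟩
    -- show S n ⊆ U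
    have hSnU : S n ⊆ U := by
      intro x hx
      by_contra hxU
      have hx0 : x ∈ S 0 := hSanti (Nat.zero_le n) hx
      have hxmem : x ∈ S 0 ∩ ⋂ i ∈ u, S i ∩ Uᶜ := by
        refine ⟨hx0, Set.mem_iInter₂.2 fun i hi => ⟨?_, hxU⟩⟩
        exact hSanti (le_trans (Finset.le_sup (f := id) hi) hn) hx
      rw [hu] at hxmem
      exact hxmem
    refine EMetric.hausdorffEdist_le_of_infEdist ?_ ?_
    · intro x hx
      exact le_of_lt (hSnU hx)
    · intro x hx
      have : x ∈ S n := hTS n hx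
      rw [EMetric.infEdist_zero_of_mem this]
      exact zero_le
  · -- some S i0 is empty; then eventually everything is empty
    push_neg at hne
    obtain ⟨i0, hi0⟩ := hne
    have hi0' : S i0 = ∅ := hi0
    have hTempty : T = ∅ := Set.subset_eq_empty (by rw [← hi0']; exact hTS i0) rfl
    have : ∀ n ≥ i0, EMetric.hausdorffEdist (S n) T = 0 := by
      intro n hn
      have : S n = ∅ := Set.subset_eq_empty (by rw [← hi0']; exact hSanti hn) rfl
      rw [this, hTempty]
      exact EMetric.hausdorffEdist_self
    refine Tendsto.congr' ?_ tendsto_const_nhds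
    filter_upwards [eventually_ge_atTop i0] with n hn
    exact (this n hn).symm

end
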